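/- Let a ∈ (0,1), p ≥ 1 and b ≥ e. Then Σ_{k=0}^{∞} a^k Π_{j=0}^{k−1} (1 + b·2^{−pj}) ≤ (1/(1−a)) · exp( e/(1 − 2^{−p}) ) · exp( (3/2)(ln b)² ). In particular, as a function of b the sum grows at most like exp((3/2)(ln b)²). -/

import Mathlib

open Real Finset

private lemma statement15_arith (L c K' : ℝ) (hL1 : 1 ≤ L) (hc : Real.log 2 ≤ c)
    (hK1 : 1 ≤ K') (h1 : L ≤ c * K') (h2 : c * K' < L + c) :
    K' * (Real.log 2 + L) - c * K' * (K' - 1) / 2 ≤ 3/2 * L^2 + (Real.exp 1 - 1) := by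
  have hl2a : (0.6931:ℝ) < Real.log 2 := by
    have := Real.log_two_gt_d9; linarith
  have hl2b : Real.log 2 < 0.6932 := by
    have := Real.log_two_lt_d9; linarith
  have he : (2.7182:ℝ) < Real.exp 1 := by
    have := Real.exp_one_gt_d9; linarith
  have hc0 : (0:ℝ) < c := by linarith
  rcases le_or_gt c (2*L) with hcase | hcase
  · rw [← mul_le_mul_iff_right₀ hc0]
    nlinarith [sq_nonneg (c*K' - L - c/2),
      mul_nonneg (sub_nonneg.2 hcase)
        (by nlinarith : (0:ℝ) ≤ 3/2*L^2 + Real.exp 1 - 1 - Real.log 2 - L/2 - c/8),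
      sq_nonneg (L - 9/8), mul_pos hc0 hc0,
      mul_nonneg (by linarith : (0:ℝ) ≤ Real.log 2)
        (by linarith : (0:ℝ) ≤ L + c - c*K')]
  · have hK32 : K' < 3/2 := by nlinarith
    nlinarith [sq_nonneg (L-1),
      mul_nonneg (by linarith : (0:ℝ) ≤ K' - 1) (by linarith : (0:ℝ) ≤ 3/2 - K')]

private lemma statement15_final (G L q : ℝ) (hq0 : 0 < q) (h1q : 0 < 1 - q)
    (hGle : G ≤ 3/2 * L^2 + (Real.exp 1 - 1)) :
    G + 1 / (1 - q) ≤ Real.exp 1 / (1 - q) + 3 / 2 * L ^ 2 := by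
  have he : (0:ℝ) ≤ Real.exp 1 - 1 := by
    nlinarith [Real.exp_one_gt_d9]
  have hfrac : Real.exp 1 - 1 ≤ (Real.exp 1 - 1) / (1 - q) := by
    rw [le_div_iff₀ h1q]
    nlinarith [mul_nonneg he hq0.le]
  have hsplit : Real.exp 1 / (1 - q) = 1 / (1 - q) + (Real.exp 1 - 1) / (1 - q) := by
    field_simp
    ring
  linarith

/-- For `a ∈ (0,1)`, `p ≥ 1` and `b ≥ e`,
`Σ_{k=0}^∞ a^k Π_{j=0}^{k−1}(1 + b 2^{−pj}) ≤ (1/(1−a)) exp(e/(1−2^{−p})) exp((3/2)(ln b)²)`;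
in particular the sum grows in `b` at most like `exp((3/2)(ln b)²)`. -/
theorem statement15 (a p b : ℝ) (ha0 : 0 < a) (ha1 : a < 1) (hp : 1 ≤ p)
    (hb : Real.exp 1 ≤ b) :
    ∑' k : ℕ, a ^ k *
        ∏ j ∈ Finset.range k, (1 + b * (2:ℝ) ^ (-(p * (j : ℝ)))) ≤
      (1 / (1 - a)) * Real.exp (Real.exp 1 / (1 - (2:ℝ) ^ (-p))) *
        Real.exp ((3 / 2) * Real.log b ^ 2) := by
  have hb0 : 0 < b := lt_of_lt_of_le (exp_pos 1) hb
  set L := Real.log b with hLdef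
  have hL1 : 1 ≤ L := (le_log_iff_exp_le hb0).2 hb
  have hlog2 : 0 < Real.log 2 := log_pos one_lt_two
  set c := p * Real.log 2 with hcdef
  have hc_ge : Real.log 2 ≤ c := by nlinarith
  have hc0 : 0 < c := lt_of_lt_of_le hlog2 hc_ge
  set q := (2:ℝ) ^ (-p) with hqdef
  have hq0 : 0 < q := rpow_pos_of_pos two_pos _
  have hq1 : q < 1 :=
    rpow_lt_one_of_one_lt_of_neg one_lt_two (by linarith)
  have h1q : 0 < 1 - q := by linarith
  have hqexp : q = Real.exp (-c) := by
    rw [hqdef, Real.rpow_def_of_pos two_pos]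
    ring_nf
    rw [hcdef]; ring_nf
  have h2q : ∀ j : ℕ, (2:ℝ) ^ (-(p * (j:ℝ))) = q ^ j := by
    intro j
    rw [hqdef, ← Real.rpow_natCast ((2:ℝ) ^ (-p)) j,
      ← Real.rpow_mul (by norm_num : (0:ℝ) ≤ 2)]
    ring_nf
  have hbq : ∀ j : ℕ, b * q ^ j = Real.exp (L - c * j) := by
    intro j
    rw [hqexp, ← Real.exp_nat_mul, ← Real.exp_log hb0, ← Real.exp_add]
    ring_nf
    rw [hLdef]; ring_nf
  set K := ⌈L / c⌉₊ with hKdef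
  have hK1 : 1 ≤ K := Nat.one_le_ceil_iff.2 (by positivity)
  have hK1' : (1:ℝ) ≤ (K:ℝ) := by exact_mod_cast hK1
  have hKge : L ≤ c * (K:ℝ) := by
    have := Nat.le_ceil (L / c)
    rw [div_le_iff₀ hc0] at this
    linarith
  have hKlt : c * (K:ℝ) < L + c := by
    have h := Nat.ceil_lt_add_one (by positivity : (0:ℝ) ≤ L / c)
    have h2 : (K:ℝ) - 1 < L / c := by rw [hKdef]; linarith
    have h3 : ((K:ℝ) - 1) * c < L := (lt_div_iff₀ hc0).1 h2
    linarith
  set G : ℝ := (K:ℝ) * (Real.log 2 + L) - c * K * ((K:ℝ) - 1) / 2 with hGdef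
  set C : ℝ := Real.exp (G + 1 / (1 - q)) with hCdef
  have hfacpos : ∀ j : ℕ, 0 < 1 + b * q ^ j := fun j => by positivity
  have key : ∀ k : ℕ, ∏ j ∈ range k, (1 + b * (2:ℝ) ^ (-(p * (j : ℝ)))) ≤ C := by
    intro k
    have hrw : ∏ j ∈ range k, (1 + b * (2:ℝ) ^ (-(p * (j : ℝ))))
        = ∏ j ∈ range k, (1 + b * q ^ j) :=
      Finset.prod_congr rfl (fun j _ => by rw [h2q j])
    rw [hrw]
    have step1 : ∏ j ∈ range k, (1 + b * q ^ j)
        ≤ ∏ j ∈ range (max k K), (1 + b * q ^ j) := by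
      have hone : (1:ℝ) ≤ ∏ j ∈ Ico k (max k K), (1 + b * q ^ j) := by
        calc (1:ℝ) = ∏ j ∈ Ico k (max k K), (1:ℝ) := (Finset.prod_const_one).symm
          _ ≤ ∏ j ∈ Ico k (max k K), (1 + b * q ^ j) :=
            Finset.prod_le_prod (fun j _ => zero_le_one)
              (fun j _ => by have := mul_pos hb0 (pow_pos hq0 j); linarith)
      rw [range_eq_Ico, range_eq_Ico,
        ← Finset.prod_Ico_consecutive _ (Nat.zero_le k) (le_max_left k K)]
      exact le_mul_of_one_le_right (Finset.prod_nonneg (fun j _ => (hfacpos j).le)) hone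
    have step2 : ∏ j ∈ range (max k K), (1 + b * q ^ j)
        = (∏ j ∈ range K, (1 + b * q ^ j)) * ∏ j ∈ Ico K (max k K), (1 + b * q ^ j) := by
      rw [range_eq_Ico,
        ← Finset.prod_Ico_consecutive _ (Nat.zero_le K) (le_max_right k K), range_eq_Ico]
    have head : ∏ j ∈ range K, (1 + b * q ^ j) ≤ Real.exp G := by
      have hle : ∀ j ∈ range K, 1 + b * q ^ j ≤ Real.exp (Real.log 2 + (L - c * j)) := by
        intro j hj
        have hjK : (j:ℝ) < L / c := by
          exact_mod_cast Nat.lt_ceil.1 (Finset.mem_range.1 hj)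
        have hcj : c * (j:ℝ) < L := by
          rw [lt_div_iff₀ hc0] at hjK; linarith [hjK]
        have h1 : (1:ℝ) ≤ b * q ^ j := by
          rw [hbq j]
          calc (1:ℝ) = Real.exp 0 := (Real.exp_zero).symm
            _ ≤ Real.exp (L - c * j) := Real.exp_le_exp.2 (by linarith)
        rw [hbq j] at h1
        rw [Real.exp_add, Real.exp_log two_pos, hbq j]
        linarith
      calc ∏ j ∈ range K, (1 + b * q ^ j)
          ≤ ∏ j ∈ range K, Real.exp (Real.log 2 + (L - c * j)) :=
            Finset.prod_le_prod (fun j _ => (hfacpos j).le) hle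
        _ = Real.exp (∑ j ∈ range K, (Real.log 2 + (L - c * j))) :=
            (Real.exp_sum _ _).symm
        _ = Real.exp G := by
            congr 1
            have hgauss : (∑ j ∈ range K, (j:ℝ)) = (K:ℝ) * ((K:ℝ) - 1) / 2 := by
              have h := Finset.sum_range_id_mul_two K
              have h' := congrArg (Nat.cast : ℕ → ℝ) h
              push_cast [Nat.cast_sub hK1] at h'
              linarith
            rw [Finset.sum_add_distrib, Finset.sum_const, Finset.sum_sub_distrib,
              Finset.sum_const, ← Finset.mul_sum, hgauss, hGdef]
            simp [nsmul_eq_mul]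
            ring
    have tail : ∏ j ∈ Ico K (max k K), (1 + b * q ^ j) ≤ Real.exp (1 / (1 - q)) := by
      have hle : ∀ j ∈ Ico K (max k K), 1 + b * q ^ j ≤ Real.exp (b * q ^ j) := by
        intro j _
        have := Real.add_one_le_exp (b * q ^ j)
        linarith
      calc ∏ j ∈ Ico K (max k K), (1 + b * q ^ j)
          ≤ ∏ j ∈ Ico K (max k K), Real.exp (b * q ^ j) :=
            Finset.prod_le_prod (fun j _ => (hfacpos j).le) hle
        _ = Real.exp (∑ j ∈ Ico K (max k K), b * q ^ j) := (Real.exp_sum _ _).symm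
        _ ≤ Real.exp (1 / (1 - q)) := by
            apply Real.exp_le_exp.2
            rw [Finset.sum_Ico_eq_sum_range]
            have hbqK : b * q ^ K ≤ 1 := by
              rw [hbq K]
              calc Real.exp (L - c * K) ≤ Real.exp 0 :=
                    Real.exp_le_exp.2 (by linarith)
                _ = 1 := Real.exp_zero
            have hgeom : (∑ i ∈ range (max k K - K), q ^ i) ≤ 1 / (1 - q) := by
              rw [geom_sum_eq hq1.ne (max k K - K)]
              have heq : (q ^ (max k K - K) - 1) / (q - 1)
                  = (1 - q ^ (max k K - K)) / (1 - q) := by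
                rw [← neg_div_neg_eq]; ring_nf
              rw [heq, div_le_div_iff₀ h1q h1q]
              nlinarith [pow_nonneg hq0.le (max k K - K)]
            calc (∑ i ∈ range (max k K - K), b * q ^ (K + i))
                = (b * q ^ K) * ∑ i ∈ range (max k K - K), q ^ i := by
                  rw [Finset.mul_sum]
                  exact Finset.sum_congr rfl (fun i _ => by rw [pow_add]; ring)
              _ ≤ 1 * (1 / (1 - q)) :=
                  mul_le_mul hbqK hgeom
                    (Finset.sum_nonneg (fun i _ => pow_nonneg hq0.le i))
                    (by linarith)
              _ = 1 / (1 - q) := one_mul _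
    calc ∏ j ∈ range k, (1 + b * q ^ j) ≤ ∏ j ∈ range (max k K), (1 + b * q ^ j) := step1
      _ = _ := step2
      _ ≤ Real.exp G * Real.exp (1 / (1 - q)) :=
          mul_le_mul head tail (Finset.prod_nonneg (fun j _ => (hfacpos j).le))
            (Real.exp_pos _).le
      _ = C := by rw [hCdef, Real.exp_add]
  have hPnonneg : ∀ k : ℕ, 0 ≤ ∏ j ∈ range k, (1 + b * (2:ℝ) ^ (-(p * (j : ℝ)))) := by
    intro k
    apply Finset.prod_nonneg
    intro j _
    have : (0:ℝ) < (2:ℝ) ^ (-(p * (j:ℝ))) := rpow_pos_of_pos two_pos _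
    nlinarith
  have hterm : ∀ k : ℕ, a ^ k * ∏ j ∈ range k, (1 + b * (2:ℝ) ^ (-(p * (j : ℝ))))
      ≤ a ^ k * C := fun k =>
    mul_le_mul_of_nonneg_left (key k) (pow_nonneg ha0.le k)
  have hS1 : Summable (fun k : ℕ => a ^ k * C) :=
    (summable_geometric_of_lt_one ha0.le ha1).mul_right C
  have hS0 : Summable (fun k : ℕ => a ^ k *
      ∏ j ∈ range k, (1 + b * (2:ℝ) ^ (-(p * (j : ℝ))))) :=
    Summable.of_nonneg_of_le
      (fun k => mul_nonneg (pow_nonneg ha0.le k) (hPnonneg k)) hterm hS1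
  have h1a : (0:ℝ) < 1 - a := by linarith
  calc ∑' k : ℕ, a ^ k * ∏ j ∈ range k, (1 + b * (2:ℝ) ^ (-(p * (j : ℝ))))
      ≤ ∑' k : ℕ, a ^ k * C := Summable.tsum_le_tsum hterm hS0 hS1
    _ = (1 / (1 - a)) * C := by
        rw [tsum_mul_right, tsum_geometric_of_lt_one ha0.le ha1, one_div, mul_comm]
    _ ≤ (1 / (1 - a)) * (Real.exp (Real.exp 1 / (1 - q)) * Real.exp ((3 / 2) * L ^ 2)) := by
        apply mul_le_mul_of_nonneg_left _ (by positivity)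
        rw [hCdef, ← Real.exp_add]
        apply Real.exp_le_exp.2
        have hGle : G ≤ 3/2 * L^2 + (Real.exp 1 - 1) :=
          statement15_arith L c (K:ℝ) hL1 hc_ge hK1' hKge hKlt
        exact statement15_final G L q hq0 h1q hGle
    _ = (1 / (1 - a)) * Real.exp (Real.exp 1 / (1 - q)) * Real.exp ((3 / 2) * L ^ 2) := by
        ring
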